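/- For all integers n ≥ 1 and 0 ≤ s ≤ 2^n, the total influence of the lexicographic function satisfies I[ℓ_n⟨s⟩] = 2sn/2^n − (4/2^n)·Σ_{x=0}^{s−1} wt(x), where wt(x) is the number of ones in the binary representation of x. -/

import Mathlib

noncomputable section

/-- Number of neighbors of `x` in the Hamming cube at which `f` differs from `f x`. -/
def sensitivity {n : ℕ} (f : (Fin n → Bool) → ℝ) (x : Fin n → Bool) : ℕ :=
  (Finset.univ.filter fun i : Fin n => f (Function.update x i (!(x i))) ≠ f x).card

/-- Total influence as average sensitivity: I[f] = (1/2^n) Σ_x S_f(x). -/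
def sensInfluence {n : ℕ} (f : (Fin n → Bool) → ℝ) : ℝ :=
  (∑ x : Fin n → Bool, (sensitivity f x : ℝ)) / 2 ^ n

/-- Rank of `x` in the lexicographic order on {-1,1}^n, where `true` (= -1) comes
first and coordinate 0 is the most significant. -/
def lexRank {n : ℕ} (x : Fin n → Bool) : ℕ :=
  ∑ i : Fin n, (if x i then 0 else 2 ^ (n - 1 - (i : ℕ)))

/-- The lexicographic function ℓ_n⟨s⟩: value -1 (true) on the initial segment of
size `s` in lexicographic order, +1 elsewhere. -/
def lexF (n s : ℕ) : (Fin n → Bool) → ℝ :=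
  fun x => if lexRank x < s then -1 else 1


open Finset

variable {n : ℕ}

def flipB (x : Fin n → Bool) (i : Fin n) : Fin n → Bool := Function.update x i (!(x i))

lemma flipB_self (x : Fin n → Bool) (i : Fin n) : flipB x i i = !(x i) := by
  simp [flipB]

lemma flipB_ne (x : Fin n → Bool) {i j : Fin n} (h : j ≠ i) : flipB x i j = x j := by
  simp [flipB, Function.update_of_ne h]

lemma flipB_flipB (x : Fin n → Bool) (i : Fin n) : flipB (flipB x i) i = x := by
  simp [flipB]


lemma lexRank_eq (x : Fin n → Bool) (i : Fin n) :
    lexRank x = (if x i then 0 else 2 ^ (n - 1 - (i : ℕ)))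
      + ∑ j ∈ Finset.univ.erase i, (if x j then 0 else 2 ^ (n - 1 - (j : ℕ))) :=
  (Finset.add_sum_erase _ _ (mem_univ i)).symm

lemma lexRank_flip_eq (x : Fin n → Bool) (i : Fin n) :
    lexRank (flipB x i) = (if !(x i) then 0 else 2 ^ (n - 1 - (i : ℕ)))
      + ∑ j ∈ Finset.univ.erase i, (if x j then 0 else 2 ^ (n - 1 - (j : ℕ))) := by
  rw [lexRank_eq (flipB x i) i, flipB_self]
  congr 1
  refine Finset.sum_congr rfl fun j hj => ?_
  rw [flipB_ne x (Finset.ne_of_mem_erase hj)]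

lemma lexRank_flip_true {x : Fin n → Bool} {i : Fin n} (h : x i = true) :
    lexRank (flipB x i) = lexRank x + 2 ^ (n - 1 - (i : ℕ)) := by
  rw [lexRank_flip_eq, lexRank_eq x i, h]; simp; ring

lemma lexRank_flip_false {x : Fin n → Bool} {i : Fin n} (h : x i = false) :
    lexRank x = lexRank (flipB x i) + 2 ^ (n - 1 - (i : ℕ)) := by
  rw [lexRank_flip_eq, lexRank_eq x i, h]; simp; ring

lemma two_pow_sum (m : ℕ) : ∑ k ∈ Finset.range m, 2 ^ k + 1 = 2 ^ m := by
  induction m with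
  | zero => simp
  | succ m ih => rw [Finset.sum_range_succ, pow_succ]; omega

lemma lexRank_lt (x : Fin n → Bool) : lexRank x < 2 ^ n := by
  have h1 : lexRank x ≤ ∑ i : Fin n, 2 ^ (n - 1 - (i : ℕ)) := by
    refine Finset.sum_le_sum fun i _ => ?_
    split <;> simp
  have h2 : ∑ i : Fin n, 2 ^ (n - 1 - (i : ℕ)) = ∑ k ∈ Finset.range n, 2 ^ k := by
    rw [Fin.sum_univ_eq_sum_range (fun k => 2 ^ (n - 1 - k)) n, ← Finset.sum_range_reflect]
    refine Finset.sum_congr rfl fun j hj => ?_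
    have := Finset.mem_range.1 hj
    congr 1
    omega
  have := two_pow_sum n
  omega

lemma lexRank_cons (x : Fin (n + 1) → Bool) :
    lexRank x = 2 * lexRank (fun i : Fin n => x i.castSucc)
      + (if x (Fin.last n) then 0 else 1) := by
  unfold lexRank
  rw [Fin.sum_univ_castSucc, Finset.mul_sum]
  congr 1
  · refine Finset.sum_congr rfl fun i _ => ?_
    have hi : (i : ℕ) < n := i.isLt
    have : n + 1 - 1 - ((i.castSucc : Fin (n+1)) : ℕ) = (n - 1 - (i : ℕ)) + 1 := by
      simp [Fin.coe_castSucc]; omega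
    rw [this, pow_succ]
    split <;> ring
  · simp

lemma lexRank_injective : Function.Injective (lexRank (n := n)) := by
  induction n with
  | zero => intro x y _; funext i; exact i.elim0
  | succ n ih =>
    intro x y h
    rw [lexRank_cons x, lexRank_cons y] at h
    have hb : ∀ b : Bool, (if b then 0 else 1) < 2 := by intro b; split <;> omega
    have hlast : x (Fin.last n) = y (Fin.last n) := by
      have h1 := hb (x (Fin.last n)); have h2 := hb (y (Fin.last n))
      have : (if x (Fin.last n) then 0 else 1) = (if y (Fin.last n) then 0 else 1) := by omega
      cases hx : x (Fin.last n) <;> cases hy : y (Fin.last n) <;> simp [hx, hy] at this ⊢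
    have hinit : (fun i : Fin n => x i.castSucc) = (fun i : Fin n => y i.castSucc) := by
      apply ih
      rw [hlast] at h
      omega
    funext i
    refine Fin.lastCases hlast (fun j => ?_) i
    exact congrFun hinit j

lemma digitsum_bit (a b : ℕ) (hb : b < 2) :
    (Nat.digits 2 (2 * a + b)).sum = b + (Nat.digits 2 a).sum := by
  rcases Nat.eq_zero_or_pos (2 * a + b) with h | h
  · have ha : a = 0 := by omega
    have hb0 : b = 0 := by omega
    simp [ha, hb0]
  · rw [Nat.digits_def' (by norm_num : 1 < 2) h]
    have h1 : (2 * a + b) % 2 = b := by omega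
    have h2 : (2 * a + b) / 2 = a := by omega
    rw [List.sum_cons, h1, h2]

def wtF (x : Fin n → Bool) : ℕ := ∑ i : Fin n, (if x i = false then 1 else 0)

lemma digitsum_lexRank (x : Fin n → Bool) :
    (Nat.digits 2 (lexRank x)).sum = wtF x := by
  induction n with
  | zero => simp [lexRank, wtF]
  | succ n ih =>
    rw [lexRank_cons, digitsum_bit _ _ (by split <;> omega)]
    unfold wtF
    rw [Fin.sum_univ_castSucc, ih]
    cases h : x (Fin.last n) <;> simp [h, wtF] <;> omega

lemma lexRank_surj {a : ℕ} (ha : a < 2 ^ n) : ∃ x : Fin n → Bool, lexRank x = a := by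
  classical
  set t := (Finset.univ : Finset (Fin n → Bool)).image lexRank with ht
  have h1 : t.card = 2 ^ n := by
    rw [ht, Finset.card_image_of_injective _ lexRank_injective, Finset.card_univ]
    simp
  have h2 : t ⊆ Finset.range (2 ^ n) := by
    intro b hb
    rw [ht, Finset.mem_image] at hb
    obtain ⟨x, -, rfl⟩ := hb
    exact Finset.mem_range.2 (lexRank_lt x)
  have h3 : t = Finset.range (2 ^ n) :=
    Finset.eq_of_subset_of_card_le h2 (by simp [h1])
  have : a ∈ t := h3 ▸ Finset.mem_range.2 ha
  rw [ht, Finset.mem_image] at this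
  obtain ⟨x, -, hx⟩ := this
  exact ⟨x, hx⟩

lemma sum_seg (s : ℕ) (hs : s ≤ 2 ^ n) (g : ℕ → ℕ) :
    ∑ x ∈ Finset.univ.filter (fun x : Fin n → Bool => lexRank x < s), g (lexRank x)
      = ∑ a ∈ Finset.range s, g a := by
  refine Finset.sum_bij (fun x _ => lexRank x) ?_ ?_ ?_ (fun _ _ => rfl)
  · intro x hx
    exact Finset.mem_range.2 (Finset.mem_filter.1 hx).2
  · intro x hx y hy h
    exact lexRank_injective h
  · intro a ha
    have ha' : a < s := Finset.mem_range.1 ha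
    obtain ⟨x, hx⟩ := lexRank_surj (lt_of_lt_of_le ha' hs)
    exact ⟨x, Finset.mem_filter.2 ⟨Finset.mem_univ x, hx ▸ ha'⟩, hx⟩

lemma flipB_def (x : Fin n → Bool) (i : Fin n) : Function.update x i (!(x i)) = flipB x i := rfl

lemma flip_swap (F : (Fin n → Bool) → Fin n → ℕ) :
    ∑ x : Fin n → Bool, ∑ i : Fin n, F x i
      = ∑ x : Fin n → Bool, ∑ i : Fin n, F (flipB x i) i := by
  rw [Finset.sum_comm]
  rw [show (∑ x : Fin n → Bool, ∑ i : Fin n, F (flipB x i) i)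
      = ∑ i : Fin n, ∑ x : Fin n → Bool, F (flipB x i) i from Finset.sum_comm]
  refine Finset.sum_congr rfl fun i _ => ?_
  exact Fintype.sum_equiv
    (Function.Involutive.toPerm (fun x => flipB x i) (fun x => flipB_flipB x i))
    (fun x => F x i) (fun x => F (flipB x i) i)
    (fun x => (congrArg (fun y => F y i) (flipB_flipB x i)).symm)

lemma key_count (n s : ℕ) (hs : s ≤ 2 ^ n) :
    (∑ x : Fin n → Bool, sensitivity (lexF n s) x)
      + 4 * ∑ x ∈ Finset.univ.filter (fun x : Fin n → Bool => lexRank x < s), wtF x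
      = 2 * s * n := by
  classical
  -- abbreviations
  set N1 := ∑ x : Fin n → Bool, ∑ i : Fin n,
      (if lexRank x < s ∧ ¬ lexRank (flipB x i) < s then (1:ℕ) else 0) with hN1
  set N2 := ∑ x : Fin n → Bool, ∑ i : Fin n,
      (if lexRank (flipB x i) < s ∧ ¬ lexRank x < s then (1:ℕ) else 0) with hN2
  set M1 := ∑ x : Fin n → Bool, ∑ i : Fin n,
      (if lexRank x < s ∧ lexRank (flipB x i) < s ∧ x i = true then (1:ℕ) else 0) with hM1
  set M2 := ∑ x : Fin n → Bool, ∑ i : Fin n,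
      (if lexRank x < s ∧ lexRank (flipB x i) < s ∧ x i = false then (1:ℕ) else 0) with hM2
  set W := ∑ x ∈ Finset.univ.filter (fun x : Fin n → Bool => lexRank x < s), wtF x with hW
  -- card of the segment
  have hcard : (Finset.univ.filter (fun x : Fin n → Bool => lexRank x < s)).card = s := by
    have := sum_seg (n := n) s hs (fun _ => 1)
    simpa using this
  -- total sensitivity = N2 + N1
  have hsens : (∑ x : Fin n → Bool, sensitivity (lexF n s) x) = N2 + N1 := by
    rw [hN1, hN2, ← Finset.sum_add_distrib]
    refine Finset.sum_congr rfl fun x _ => ?_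
    rw [sensitivity, Finset.card_filter, ← Finset.sum_add_distrib]
    refine Finset.sum_congr rfl fun i _ => ?_
    simp only [flipB_def]
    by_cases hA : lexRank (flipB x i) < s <;> by_cases hB : lexRank x < s <;>
      simp [lexF, hA, hB] <;> norm_num
  -- N2 = N1
  have hswap : N2 = N1 := by
    rw [hN2, flip_swap (fun x i => if lexRank (flipB x i) < s ∧ ¬ lexRank x < s then 1 else 0),
      hN1]
    refine Finset.sum_congr rfl fun x _ => Finset.sum_congr rfl fun i _ => ?_
    simp only [flipB_flipB]
  -- M1 = M2
  have hMeq : M1 = M2 := by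
    rw [hM1, flip_swap
      (fun x i => if lexRank x < s ∧ lexRank (flipB x i) < s ∧ x i = true then 1 else 0), hM2]
    refine Finset.sum_congr rfl fun x _ => Finset.sum_congr rfl fun i _ => ?_
    simp only [flipB_flipB, flipB_self, Bool.not_eq_true']
    exact if_congr (by tauto) rfl rfl
  -- N1 + (M1 + M2) = s * n
  have hC : N1 + (M1 + M2) = s * n := by
    rw [hN1, hM1, hM2, ← Finset.sum_add_distrib, ← Finset.sum_add_distrib]
    have : ∀ x : Fin n → Bool,
        ((∑ i : Fin n, (if lexRank x < s ∧ ¬ lexRank (flipB x i) < s then (1:ℕ) else 0))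
          + ((∑ i : Fin n, (if lexRank x < s ∧ lexRank (flipB x i) < s ∧ x i = true then (1:ℕ) else 0))
            + ∑ i : Fin n, (if lexRank x < s ∧ lexRank (flipB x i) < s ∧ x i = false then (1:ℕ) else 0)))
        = if lexRank x < s then n else 0 := by
      intro x
      rw [← Finset.sum_add_distrib, ← Finset.sum_add_distrib]
      have : ∀ i : Fin n,
          ((if lexRank x < s ∧ ¬ lexRank (flipB x i) < s then (1:ℕ) else 0)
            + ((if lexRank x < s ∧ lexRank (flipB x i) < s ∧ x i = true then (1:ℕ) else 0)
              + (if lexRank x < s ∧ lexRank (flipB x i) < s ∧ x i = false then (1:ℕ) else 0)))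
          = if lexRank x < s then 1 else 0 := by
        intro i
        by_cases hB : lexRank x < s <;> by_cases hA : lexRank (flipB x i) < s <;>
          cases hx : x i <;> simp [hB, hA, hx]
      rw [Finset.sum_congr rfl fun i _ => this i]
      by_cases hB : lexRank x < s <;> simp [hB, Finset.card_univ]
    rw [Finset.sum_congr rfl fun x _ => this x, ← Finset.sum_filter, Finset.sum_const,
      hcard, smul_eq_mul]
  -- M2 = W
  have hM2W : M2 = W := by
    rw [hM2, hW]
    have h1 : ∀ (x : Fin n → Bool),
        (∑ i : Fin n, (if lexRank x < s ∧ lexRank (flipB x i) < s ∧ x i = false then (1:ℕ) else 0))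
          = if lexRank x < s then wtF x else 0 := by
      intro x
      have h2 : ∀ i : Fin n,
          (if lexRank x < s ∧ lexRank (flipB x i) < s ∧ x i = false then (1:ℕ) else 0)
            = if lexRank x < s then (if x i = false then 1 else 0) else 0 := by
        intro i
        by_cases hB : lexRank x < s
        · by_cases hx : x i = false
          · have hpos : 0 < 2 ^ (n - 1 - (i:ℕ)) := Nat.pow_pos (by norm_num)
            have hA : lexRank (flipB x i) < s := by
              have hlt : lexRank (flipB x i) < lexRank x := by
                rw [lexRank_flip_false hx]
                exact Nat.lt_add_of_pos_right hpos
              exact hlt.trans hB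
            simp [hB, hx, hA]
          · simp [hB, hx]
        · simp [hB]
      rw [Finset.sum_congr rfl fun i _ => h2 i]
      by_cases hB : lexRank x < s <;> simp [hB, wtF]
    rw [Finset.sum_congr rfl fun x _ => h1 x, ← Finset.sum_filter]
  -- assemble
  have hgoal : (∑ x : Fin n → Bool, sensitivity (lexF n s) x) + 4 * W
      = 2 * (N1 + (M1 + M2)) := by
    rw [hsens, hswap, hMeq, hM2W]; ring
  rw [hgoal, hC]; ring

/-- Hart's formula: I[ℓ_n⟨s⟩] = 2sn/2^n − (4/2^n)·Σ_{x<s} wt(x), where wt(x) is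
the number of ones in the binary representation of x. -/
theorem influence_lex_hart (n : ℕ) (hn : 1 ≤ n) (s : ℕ) (hs : s ≤ 2 ^ n) :
    sensInfluence (lexF n s) =
      2 * s * n / 2 ^ n - (4 / 2 ^ n) * ∑ x ∈ Finset.range s, ((Nat.digits 2 x).sum : ℝ) := by
  classical
  have key := key_count n s hs
  have hWsum : ∑ x ∈ Finset.univ.filter (fun x : Fin n → Bool => lexRank x < s), wtF x
      = ∑ a ∈ Finset.range s, (Nat.digits 2 a).sum := by
    rw [← sum_seg (n := n) s hs (fun a => (Nat.digits 2 a).sum)]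
    exact Finset.sum_congr rfl fun x _ => (digitsum_lexRank x).symm
  rw [hWsum] at key
  rw [sensInfluence]
  have hcast : (∑ x : Fin n → Bool, (sensitivity (lexF n s) x : ℝ))
      = 2 * s * n - 4 * ∑ a ∈ Finset.range s, ((Nat.digits 2 a).sum : ℝ) := by
    have h := congrArg (fun m : ℕ => (m : ℝ)) key
    push_cast at h ⊢
    linarith
  rw [hcast]; ring
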